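/- Let n ≥ 2, let 1 ≤ k ≤ n − 1 and α > 0. If λ ∈ Γ̃_k and S_{k+1}(λ) > 0, then λ ∈ Γ̃_{k+1}; that is, σ_k(λ) > 0. -/

import Mathlib

open scoped BigOperators

/-- The `k`-th elementary symmetric polynomial `σ_k(λ)` of `λ ∈ ℝⁿ`, indexed by `k : ℤ`,
with the conventions `σ₀ = 1` and `σ_k = 0` for `k < 0` or `k > n`. -/
noncomputable def esymmZ (n : ℕ) (k : ℤ) (lam : Fin n → ℝ) : ℝ :=
  if k < 0 then 0 else ∑ s ∈ Finset.univ.powersetCard k.toNat, ∏ i ∈ s, lam i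

/-- `S_k(λ) := σ_k(λ) + α σ_{k-1}(λ)`. -/
noncomputable def SZ (n : ℕ) (α : ℝ) (k : ℤ) (lam : Fin n → ℝ) : ℝ :=
  esymmZ n k lam + α * esymmZ n (k - 1) lam

/-- The Garding cone `Γ_m = {λ ∈ ℝⁿ : σ_j(λ) > 0 for j = 1,…,m}` (so `Γ₀ = ℝⁿ`). -/
def Gamma (n : ℕ) (m : ℕ) : Set (Fin n → ℝ) :=
  {lam | ∀ j : ℕ, 1 ≤ j → j ≤ m → 0 < esymmZ n j lam}

/-- `Γ̃_k := Γ_{k-1} ∩ {λ : S_k(λ) > 0}`. -/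
def GammaTilde (n : ℕ) (α : ℝ) (k : ℕ) : Set (Fin n → ℝ) :=
  Gamma n (k - 1) ∩ {lam | 0 < SZ n α k lam}

/-- `σ_k(λ|i)`: the `k`-th elementary symmetric polynomial of the vector obtained
from `λ` by deleting the entry `λ_i`. -/
noncomputable def esymmDel (n : ℕ) (k : ℤ) (lam : Fin n → ℝ) (i : Fin n) : ℝ :=
  if k < 0 then 0 else
    ∑ s ∈ (Finset.univ.erase i).powersetCard k.toNat, ∏ j ∈ s, lam j

/-- `S_k(λ|i) := σ_k(λ|i) + α σ_{k-1}(λ|i)`.  In particular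
`S_k^{ii}(λ) = ∂S_k/∂λ_i = S_{k-1}(λ|i) = SDel n α (k-1) lam i`. -/
noncomputable def SDel (n : ℕ) (α : ℝ) (k : ℤ) (lam : Fin n → ℝ) (i : Fin n) : ℝ :=
  esymmDel n k lam i + α * esymmDel n (k - 1) lam i

/-- `σ_k(λ|pq)`: the `k`-th elementary symmetric polynomial of the vector obtained
from `λ` by deleting the entries `λ_p` and `λ_q`. -/
noncomputable def esymmDel2 (n : ℕ) (k : ℤ) (lam : Fin n → ℝ) (p q : Fin n) : ℝ :=
  if k < 0 then 0 else
    ∑ s ∈ ((Finset.univ.erase p).erase q).powersetCard k.toNat, ∏ l ∈ s, lam l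

/-- `S_k^{pp,qq}(λ) = ∂²S_k/∂λ_p∂λ_q`, which equals
`σ_{k-2}(λ|pq) + α σ_{k-3}(λ|pq)` for `p ≠ q`, and `0` for `p = q`. -/
noncomputable def Spq (n : ℕ) (α : ℝ) (k : ℤ) (lam : Fin n → ℝ) (p q : Fin n) : ℝ :=
  if p = q then 0 else esymmDel2 n (k - 2) lam p q + α * esymmDel2 n (k - 3) lam p q


namespace NewtonAux

open Finset Polynomial

open Finset Polynomial

noncomputable def E (m j : ℕ) (g : Fin m → ℝ) : ℝ :=
  ∑ t ∈ Finset.univ.powersetCard j, ∏ l ∈ t, g l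

lemma sum_del (m j : ℕ) (g : Fin m → ℝ) :
    ∑ i : Fin m, ∑ t ∈ ((Finset.univ : Finset (Fin m)).erase i).powersetCard j, ∏ l ∈ t, g l
      = ((m - j : ℕ) : ℝ) * E m j g := by
  have h1 : ∀ i : Fin m, ((Finset.univ : Finset (Fin m)).erase i).powersetCard j
      = (Finset.univ.powersetCard j).filter (fun t => i ∉ t) := by
    intro i; ext t
    simp only [mem_powersetCard, subset_erase, mem_filter, subset_univ, true_and]
    tauto
  calc ∑ i : Fin m, ∑ t ∈ ((Finset.univ : Finset (Fin m)).erase i).powersetCard j, ∏ l ∈ t, g l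
      = ∑ i : Fin m, ∑ t ∈ Finset.univ.powersetCard j,
          if i ∉ t then ∏ l ∈ t, g l else 0 := by
        refine Finset.sum_congr rfl fun i _ => ?_
        rw [h1 i, Finset.sum_filter]
    _ = ∑ t ∈ Finset.univ.powersetCard j, ∑ i : Fin m,
          if i ∉ t then ∏ l ∈ t, g l else 0 := Finset.sum_comm
    _ = ((m - j : ℕ) : ℝ) * E m j g := by
        rw [E, Finset.mul_sum]
        refine Finset.sum_congr rfl fun t ht => ?_
        rw [← Finset.sum_filter, Finset.sum_const, ← Finset.sdiff_eq_filter,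
          Finset.card_sdiff_of_subset (Finset.subset_univ t)]
        rw [Finset.mem_powersetCard] at ht
        rw [ht.2, Finset.card_univ, Fintype.card_fin, nsmul_eq_mul]

lemma erase_pc_self (m : ℕ) (i : Fin m) (g : Fin m → ℝ) :
    ∑ t ∈ ((Finset.univ : Finset (Fin m)).erase i).powersetCard (m - 1), ∏ l ∈ t, g l
      = ∏ l ∈ Finset.univ.erase i, g l := by
  have hc : ((Finset.univ : Finset (Fin m)).erase i).card = m - 1 := by
    rw [Finset.card_erase_of_mem (Finset.mem_univ i), Finset.card_univ, Fintype.card_fin]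
  rw [← hc, Finset.powersetCard_self, Finset.sum_singleton]

lemma sum_P (m : ℕ) (hm : 1 ≤ m) (g : Fin m → ℝ) :
    ∑ i : Fin m, ∏ l ∈ Finset.univ.erase i, g l = E m (m - 1) g := by
  have := sum_del m (m - 1) g
  simp only [erase_pc_self] at this
  rw [this]
  have : m - (m - 1) = 1 := by omega
  rw [this]; norm_num

lemma prod_eq (m : ℕ) (i : Fin m) (g : Fin m → ℝ) :
    E m m g = g i * ∏ l ∈ Finset.univ.erase i, g l := by
  rw [E]
  have hc : (Finset.univ : Finset (Fin m)).card = m := by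
    rw [Finset.card_univ, Fintype.card_fin]
  have hpc : Finset.powersetCard m (Finset.univ : Finset (Fin m)) = {Finset.univ} := by
    simpa [hc] using Finset.powersetCard_self (Finset.univ : Finset (Fin m))
  rw [hpc, Finset.sum_singleton, Finset.mul_prod_erase _ _ (Finset.mem_univ i)]

lemma split_lemma (m : ℕ) (hm : 2 ≤ m) (i : Fin m) (g : Fin m → ℝ) :
    E m (m - 1) g
      = (∑ t ∈ ((Finset.univ : Finset (Fin m)).erase i).powersetCard (m - 1), ∏ l ∈ t, g l)
        + g i * ∑ t ∈ ((Finset.univ : Finset (Fin m)).erase i).powersetCard (m - 2), ∏ l ∈ t, g l := by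
  have hins : (Finset.univ : Finset (Fin m)) = insert i (Finset.univ.erase i) :=
    (Finset.insert_erase (Finset.mem_univ i)).symm
  have hm1 : m - 1 = (m - 2) + 1 := by omega
  rw [E]
  conv_lhs => rw [hins]
  have hdisj : Disjoint (Finset.powersetCard (m - 2 + 1) ((Finset.univ : Finset (Fin m)).erase i))
      ((Finset.powersetCard (m - 2) (Finset.univ.erase i)).image (insert i)) := by
    rw [Finset.disjoint_left]
    intro t ht hti
    rw [Finset.mem_powersetCard, Finset.subset_erase] at ht
    rw [Finset.mem_image] at hti
    obtain ⟨u, hu, rfl⟩ := hti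
    exact ht.1.2 (Finset.mem_insert_self i u)
  rw [hm1, Finset.powersetCard_succ_insert (Finset.notMem_erase i _),
    Finset.sum_union hdisj]
  have h2 : ∑ x ∈ (Finset.powersetCard (m - 2) (Finset.univ.erase i)).image (insert i),
      ∏ l ∈ x, g l
      = g i * ∑ t ∈ ((Finset.univ : Finset (Fin m)).erase i).powersetCard (m - 2),
          ∏ l ∈ t, g l := by
    rw [Finset.sum_image (fun t ht t' ht' h => by
        rw [Finset.mem_coe, Finset.mem_powersetCard, Finset.subset_erase] at ht ht'
        have heq : t = (insert i t).erase i := by rw [Finset.erase_insert ht.1.2]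
        rw [heq, h, Finset.erase_insert ht'.1.2])]
    rw [Finset.mul_sum]
    refine Finset.sum_congr rfl fun t ht => ?_
    rw [Finset.mem_powersetCard, Finset.subset_erase] at ht
    rw [Finset.prod_insert ht.1.2]
  rw [h2, ← hm1]

open Finset

lemma lemB (m : ℕ) (hm : 2 ≤ m) (g : Fin m → ℝ) :
    2 * m * E m (m - 2) g * E m m g ≤ ((m : ℝ) - 1) * E m (m - 1) g ^ 2 := by
  set P : Fin m → ℝ := fun i => ∏ l ∈ Finset.univ.erase i, g l with hP
  set D : Fin m → ℝ :=
    fun i => ∑ t ∈ ((Finset.univ : Finset (Fin m)).erase i).powersetCard (m - 2), ∏ l ∈ t, g l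
    with hD
  have hPsum : ∑ i : Fin m, P i = E m (m - 1) g := sum_P m (by omega) g
  have hPd : ∀ i : Fin m, P i = E m (m - 1) g - g i * D i := by
    intro i
    have := split_lemma m hm i g
    rw [erase_pc_self] at this
    rw [hP]; simp only []
    linarith [this]
  have hgP : ∀ i : Fin m, g i * P i = E m m g := fun i => (prod_eq m i g).symm
  have hDsum : ∑ i : Fin m, D i = 2 * E m (m - 2) g := by
    have := sum_del m (m - 2) g
    have h2 : m - (m - 2) = 2 := by omega
    rw [h2] at this
    rw [hD]; simp only []
    rw [this]; norm_num
  have hPsq : ∑ i : Fin m, P i ^ 2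
      = E m (m - 1) g ^ 2 - 2 * E m (m - 2) g * E m m g := by
    calc ∑ i : Fin m, P i ^ 2
        = ∑ i : Fin m, (P i * E m (m - 1) g - (g i * P i) * D i) := by
          refine Finset.sum_congr rfl fun i _ => ?_
          have h : P i ^ 2 = P i * (E m (m - 1) g - g i * D i) := by
            rw [← hPd i]; ring
          rw [h]; ring
      _ = (∑ i : Fin m, P i) * E m (m - 1) g - ∑ i : Fin m, (g i * P i) * D i := by
          rw [Finset.sum_sub_distrib, Finset.sum_mul]
      _ = E m (m - 1) g ^ 2 - E m m g * ∑ i : Fin m, D i := by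
          rw [hPsum, Finset.mul_sum]
          congr 1
          · ring
          · exact Finset.sum_congr rfl fun i _ => by rw [hgP i]
      _ = E m (m - 1) g ^ 2 - 2 * E m (m - 2) g * E m m g := by
          rw [hDsum]; ring
  have hCS : (∑ i : Fin m, P i) ^ 2 ≤ (m : ℝ) * ∑ i : Fin m, P i ^ 2 := by
    have := sq_sum_le_card_mul_sum_sq (s := (Finset.univ : Finset (Fin m))) (f := P)
    simpa [Finset.card_univ] using this
  rw [hPsum, hPsq] at hCS
  nlinarith [hCS]

open Finset Polynomial Multiset

lemma univ_map_list (l : List ℝ) : (Finset.univ.val.map l.get : Multiset ℝ) = ↑l := by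
  have h : (Finset.univ.val.map l.get : Multiset ℝ)
      = ↑(List.map l.get (List.finRange l.length)) := rfl
  rw [h, List.map_get_finRange]

lemma E_eq_esymm (m j : ℕ) (g : Fin m → ℝ) :
    (Finset.univ.val.map g).esymm j = E m j g := by
  rw [Finset.esymm_map_val]; rfl

lemma lemB' (s : Multiset ℝ) (M : ℕ) (hs : Multiset.card s = M) (hM : 2 ≤ M) :
    2 * M * s.esymm (M - 2) * s.esymm M ≤ ((M : ℝ) - 1) * s.esymm (M - 1) ^ 2 := by
  obtain ⟨l, rfl⟩ : ∃ l : List ℝ, (↑l : Multiset ℝ) = s := ⟨s.toList, s.coe_toList⟩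
  have hlen : l.length = M := by simpa using hs
  subst hlen
  rw [← univ_map_list l]
  rw [E_eq_esymm, E_eq_esymm, E_eq_esymm]
  exact lemB l.length hM l.get

open Finset Polynomial

lemma deriv_rr {p : ℝ[X]} (hroots : Multiset.card p.roots = p.natDegree)
    (hd : 0 < p.natDegree) :
    Multiset.card (derivative p).roots = (derivative p).natDegree ∧
    (derivative p).natDegree = p.natDegree - 1 := by
  have hdeg := degree_derivative_eq p hd
  have h2 : (derivative p).natDegree = p.natDegree - 1 :=
    natDegree_eq_of_degree_eq_some hdeg
  have h3 : Multiset.card (derivative p).roots ≤ p.natDegree - 1 :=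
    h2 ▸ (derivative p).card_roots'
  have h4 := p.card_roots_le_derivative
  rw [hroots] at h4
  constructor
  · omega
  · exact h2

lemma iter_rr {p : ℝ[X]} (hroots : Multiset.card p.roots = p.natDegree)
    (m : ℕ) (hm : m ≤ p.natDegree) :
    Multiset.card (derivative^[m] p).roots = (derivative^[m] p).natDegree ∧
    (derivative^[m] p).natDegree = p.natDegree - m := by
  induction m with
  | zero => exact ⟨by simpa using hroots, by simp⟩
  | succ m ih =>
    obtain ⟨ih1, ih2⟩ := ih (by omega)
    rw [Function.iterate_succ_apply']
    have hpos : 0 < (derivative^[m] p).natDegree := by omega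
    obtain ⟨h1, h2⟩ := deriv_rr ih1 hpos
    exact ⟨h1, by omega⟩

open Finset Polynomial

set_option maxHeartbeats 800000

lemma fact_ineq (k a : ℕ) :
    k * ((1 + a).descFactorial a) ^ 2
      ≤ 2 * (k + 1) * ((2 + a).descFactorial a) * ((0 + a).descFactorial a) := by
  have h0 : (0 + a).descFactorial a = a.factorial := by
    rw [Nat.zero_add, Nat.descFactorial_self]
  have h1 : (1 + a).descFactorial a = a.factorial * (a + 1) := by
    rw [Nat.descFactorial_eq_factorial_mul_choose]
    congr 1
    rw [Nat.add_comm]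
    exact Nat.choose_succ_self_right a
  have hcs : (2 + a).choose a = (2 + a).choose 2 := by
    have h := Nat.choose_symm (show 2 ≤ 2 + a by omega)
    rwa [show 2 + a - 2 = a from by omega] at h
  have h2 : (2 + a).descFactorial a = a.factorial * (2 + a).choose 2 := by
    rw [Nat.descFactorial_eq_factorial_mul_choose, hcs]
  have h3 : (2 + a) * (1 + a) = (2 + a).choose 2 * 2 := by
    have h := Nat.add_one_mul_choose_eq (1 + a) 1
    rw [Nat.choose_one_right] at h
    norm_num [Nat.succ_eq_add_one] at h
    rw [show 1 + a + 1 = 2 + a from by omega] at h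
    omega
  rw [h0, h1, h2]
  have key : k * (a + 1) ^ 2 ≤ (k + 1) * ((2 + a) * (1 + a)) := by
    calc k * (a + 1) ^ 2 = (k * (a + 1)) * (a + 1) := by ring
      _ ≤ ((k + 1) * (2 + a)) * (1 + a) :=
          Nat.mul_le_mul (Nat.mul_le_mul (by omega) (by omega)) (by omega)
      _ = (k + 1) * ((2 + a) * (1 + a)) := by ring
  calc k * (a.factorial * (a + 1)) ^ 2
      = a.factorial ^ 2 * (k * (a + 1) ^ 2) := by ring
    _ ≤ a.factorial ^ 2 * ((k + 1) * ((2 + a) * (1 + a))) :=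
        Nat.mul_le_mul_left _ key
    _ = a.factorial ^ 2 * ((k + 1) * ((2 + a).choose 2 * 2)) := by rw [h3]
    _ = 2 * (k + 1) * (a.factorial * (2 + a).choose 2) * a.factorial := by ring

lemma newton_ineq (n k : ℕ) (hk : 1 ≤ k) (hkn : k + 1 ≤ n) (g : Fin n → ℝ)
    (hprod : 0 ≤ E n (k - 1) g * E n (k + 1) g) :
    E n (k - 1) g * E n (k + 1) g ≤ E n k g ^ 2 := by
  classical
  set s : Multiset ℝ := Finset.univ.val.map g with hs
  have hcard : Multiset.card s = n := by simp [hs]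
  set p : ℝ[X] := (s.map fun a => X - C a).prod with hp
  have hproots : p.roots = s := roots_multiset_prod_X_sub_C s
  have hpdeg : p.natDegree = n := by
    rw [hp, natDegree_multiset_prod_X_sub_C_eq_card, hcard]
  have hrr : Multiset.card p.roots = p.natDegree := by rw [hproots, hcard, hpdeg]
  set a : ℕ := n - (k + 1) with ha
  obtain ⟨hq1, hq2⟩ := iter_rr hrr a (by omega)
  set q : ℝ[X] := derivative^[a] p with hq
  have hqdeg : q.natDegree = k + 1 := by rw [hq2, hpdeg]; omega
  -- Vieta for q
  have hvieta : ∀ j, j ≤ k + 1 → q.coeff j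
      = q.leadingCoeff * (-1) ^ (k + 1 - j) * q.roots.esymm (k + 1 - j) := by
    intro j hj
    have h := coeff_eq_esymm_roots_of_card hq1 (k := j) (by omega)
    rwa [hqdeg] at h
  -- coefficients of p
  have hpc : ∀ j, j ≤ n → p.coeff j = (-1) ^ (n - j) * E n (n - j) g := by
    intro j hj
    rw [hp, Multiset.prod_X_sub_C_coeff s (by rw [hcard]; exact hj), hcard, hs, E_eq_esymm]
  have hcq : ∀ j : ℕ, q.coeff j = ((j + a).descFactorial a : ℝ) * p.coeff (j + a) := by
    intro j
    rw [hq, coeff_iterate_derivative, nsmul_eq_mul]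
  set c : ℝ := q.leadingCoeff with hc
  set e0 : ℝ := q.roots.esymm (k + 1) with he0
  set e1 : ℝ := q.roots.esymm k with he1
  set e2 : ℝ := q.roots.esymm (k - 1) with he2
  set d0 : ℕ := (0 + a).descFactorial a with hd0
  set d1 : ℕ := (1 + a).descFactorial a with hd1
  set d2 : ℕ := (2 + a).descFactorial a with hd2
  have ha0 : n - (0 + a) = k + 1 := by omega
  have ha1 : n - (1 + a) = k := by omega
  have ha2 : n - (2 + a) = k - 1 := by omega
  -- the three coefficient identities (with signs)
  have h0 : c * (-1) ^ (k + 1) * e0 = (d0 : ℝ) * ((-1) ^ (k + 1) * E n (k + 1) g) := by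
    have hl := hvieta 0 (by omega)
    rw [Nat.sub_zero] at hl
    have hr := hcq 0
    rw [hpc (0 + a) (by omega), ha0, hl, ← he0, ← hd0] at hr
    exact hr
  have h1 : c * (-1) ^ k * e1 = (d1 : ℝ) * ((-1) ^ k * E n k g) := by
    have hl := hvieta 1 (by omega)
    rw [show k + 1 - 1 = k from by omega] at hl
    have hr := hcq 1
    rw [hpc (1 + a) (by omega), ha1, hl, ← he1, ← hd1] at hr
    exact hr
  have h2 : c * (-1) ^ (k - 1) * e2 = (d2 : ℝ) * ((-1) ^ (k - 1) * E n (k - 1) g) := by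
    have hl := hvieta 2 (by omega)
    rw [show k + 1 - 2 = k - 1 from by omega] at hl
    have hr := hcq 2
    rw [hpc (2 + a) (by omega), ha2, hl, ← he2, ← hd2] at hr
    exact hr
  -- strip the signs
  have hsgn : ∀ m : ℕ, ((-1 : ℝ) ^ m) ^ 2 = 1 := by
    intro m
    rw [← pow_mul, mul_comm, pow_mul]
    norm_num
  have h0' : c * e0 = (d0 : ℝ) * E n (k + 1) g := by
    calc c * e0 = c * e0 * ((-1 : ℝ) ^ (k + 1)) ^ 2 := by rw [hsgn]; ring
      _ = c * (-1) ^ (k + 1) * e0 * (-1) ^ (k + 1) := by ring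
      _ = (d0 : ℝ) * ((-1) ^ (k + 1) * E n (k + 1) g) * (-1) ^ (k + 1) := by rw [h0]
      _ = (d0 : ℝ) * E n (k + 1) g * ((-1 : ℝ) ^ (k + 1)) ^ 2 := by ring
      _ = (d0 : ℝ) * E n (k + 1) g := by rw [hsgn]; ring
  have h1' : c * e1 = (d1 : ℝ) * E n k g := by
    calc c * e1 = c * e1 * ((-1 : ℝ) ^ k) ^ 2 := by rw [hsgn]; ring
      _ = c * (-1) ^ k * e1 * (-1) ^ k := by ring
      _ = (d1 : ℝ) * ((-1) ^ k * E n k g) * (-1) ^ k := by rw [h1]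
      _ = (d1 : ℝ) * E n k g * ((-1 : ℝ) ^ k) ^ 2 := by ring
      _ = (d1 : ℝ) * E n k g := by rw [hsgn]; ring
  have h2' : c * e2 = (d2 : ℝ) * E n (k - 1) g := by
    calc c * e2 = c * e2 * ((-1 : ℝ) ^ (k - 1)) ^ 2 := by rw [hsgn]; ring
      _ = c * (-1) ^ (k - 1) * e2 * (-1) ^ (k - 1) := by ring
      _ = (d2 : ℝ) * ((-1) ^ (k - 1) * E n (k - 1) g) * (-1) ^ (k - 1) := by rw [h2]
      _ = (d2 : ℝ) * E n (k - 1) g * ((-1 : ℝ) ^ (k - 1)) ^ 2 := by ring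
      _ = (d2 : ℝ) * E n (k - 1) g := by rw [hsgn]; ring
  -- lemma B applied to the roots of q
  have hB := lemB' q.roots (k + 1) (by rw [hq1, hqdeg]) (by omega)
  rw [show k + 1 - 2 = k - 1 from by omega, show k + 1 - 1 = k from by omega,
    ← he0, ← he1, ← he2] at hB
  push_cast at hB
  -- multiply by c^2
  have hmul := mul_le_mul_of_nonneg_left hB (sq_nonneg c)
  have hBc : 2 * ((k : ℝ) + 1) * (c * e2) * (c * e0) ≤ (k : ℝ) * (c * e1) ^ 2 := by
    nlinarith [hmul]
  rw [h0', h1', h2'] at hBc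
  -- combine with the factorial inequality
  have hfactR : (k : ℝ) * (d1 : ℝ) ^ 2 ≤ 2 * ((k : ℝ) + 1) * (d2 : ℝ) * (d0 : ℝ) := by
    have h := fact_ineq k a
    rw [← hd0, ← hd1, ← hd2] at h
    exact_mod_cast h
  have hApr : 2 * ((k : ℝ) + 1) * (d2 : ℝ) * (d0 : ℝ) * (E n (k - 1) g * E n (k + 1) g)
      ≤ (k : ℝ) * (d1 : ℝ) ^ 2 * (E n k g ^ 2) := by
    calc 2 * ((k : ℝ) + 1) * (d2 : ℝ) * (d0 : ℝ) * (E n (k - 1) g * E n (k + 1) g)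
        = 2 * ((k : ℝ) + 1) * ((d2 : ℝ) * E n (k - 1) g) * ((d0 : ℝ) * E n (k + 1) g) := by
          ring
      _ ≤ (k : ℝ) * ((d1 : ℝ) * E n k g) ^ 2 := hBc
      _ = (k : ℝ) * (d1 : ℝ) ^ 2 * (E n k g ^ 2) := by ring
  have h5 := mul_le_mul_of_nonneg_right hfactR hprod
  have hd1pos : 0 < (k : ℝ) * (d1 : ℝ) ^ 2 := by
    have hp1 : 0 < d1 := by
      rw [hd1, Nat.descFactorial_eq_factorial_mul_choose]
      exact Nat.mul_pos (Nat.factorial_pos a) (Nat.choose_pos (by omega))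
    have hk' : 0 < (k : ℝ) := by exact_mod_cast hk
    have : 0 < (d1 : ℝ) := by exact_mod_cast hp1
    positivity
  have h6 : (k : ℝ) * (d1 : ℝ) ^ 2 * (E n (k - 1) g * E n (k + 1) g)
      ≤ (k : ℝ) * (d1 : ℝ) ^ 2 * (E n k g ^ 2) := le_trans h5 hApr
  exact le_of_mul_le_mul_left h6 hd1pos

end NewtonAux

lemma esymmZ_natCast (n j : ℕ) (lam : Fin n → ℝ) :
    esymmZ n (j : ℤ) lam = NewtonAux.E n j lam := by
  rw [esymmZ, if_neg (by omega), NewtonAux.E]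
  norm_num

theorem gammaTilde_succ_of_S_succ_pos
    (n : ℕ) (hn : 2 ≤ n) (k : ℕ) (hk1 : 1 ≤ k) (hk : k ≤ n - 1)
    (α : ℝ) (hα : 0 < α)
    (lam : Fin n → ℝ) (hlam : lam ∈ GammaTilde n α k)
    (hS : 0 < SZ n α (k + 1) lam) :
    lam ∈ GammaTilde n α (k + 1) ∧ 0 < esymmZ n k lam := by
  obtain ⟨hG, hSk⟩ := hlam
  have hkn : k + 1 ≤ n := by omega
  have hb : ∀ j : ℕ, esymmZ n (j : ℤ) lam = NewtonAux.E n j lam :=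
    fun j => esymmZ_natCast n j lam
  have hSk' : 0 < NewtonAux.E n k lam + α * NewtonAux.E n (k - 1) lam := by
    have h : (0:ℝ) < SZ n α (k : ℤ) lam := hSk
    rw [SZ, show ((k:ℤ) - 1) = ((k - 1 : ℕ) : ℤ) from by omega, hb, hb] at h
    exact h
  have hS' : 0 < NewtonAux.E n (k + 1) lam + α * NewtonAux.E n k lam := by
    have h := hS
    rw [SZ, show ((k:ℤ) + 1) = (((k + 1 : ℕ)) : ℤ) from by push_cast; ring] at h
    rw [show (((k + 1 : ℕ)) : ℤ) - 1 = ((k : ℕ) : ℤ) from by push_cast; ring, hb, hb] at h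
    exact h
  have hmain : 0 < NewtonAux.E n k lam := by
    by_contra hneg
    push_neg at hneg
    have h1 : 0 < NewtonAux.E n (k - 1) lam := by nlinarith
    have h2 : 0 < NewtonAux.E n (k + 1) lam := by nlinarith
    have hN := NewtonAux.newton_ineq n k hk1 hkn lam (le_of_lt (mul_pos h1 h2))
    have hx : (-(NewtonAux.E n k lam)) * (-(α * NewtonAux.E n k lam))
        < (α * NewtonAux.E n (k - 1) lam) * (NewtonAux.E n (k + 1) lam) :=
      mul_lt_mul'' (by linarith) (by linarith) (by nlinarith) (by nlinarith)
    nlinarith [hx, hN, hα]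
  refine ⟨⟨?_, ?_⟩, ?_⟩
  · intro j hj1 hj2
    rcases Nat.lt_or_ge j k with h | h
    · exact hG j hj1 (by omega)
    · have hjk : j = k := by omega
      subst hjk
      rw [hb]
      exact hmain
  · show 0 < SZ n α (((k + 1 : ℕ)) : ℤ) lam
    rw [show (((k + 1 : ℕ)) : ℤ) = (k : ℤ) + 1 from by push_cast; ring]
    exact hS
  · rw [hb]
    exact hmain
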